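/- arXiv:1504.03408 — 2 statements merged into one kernel-verified Lean document; each statement's English description precedes it below -/
import Mathlib

section
/- For every partition λ = (λ_1 ≥ ⋯ ≥ λ_ℓ > 0) of n, the determinant of the ℓ×ℓ matrix with entries 1/(λ_i − i + j)! (for 1 ≤ i, j ≤ ℓ, with the convention 1/m! := 0 when m < 0) equals Π_{(i,j) ∈ λ} 1/hook_λ(i,j); equivalently, the product h_λ of the hook lengths of λ satisfies h_λ = (det(1/(λ_i − i + j)!))^{-1}. -/
theorem sorted_getD_le {l : List ℕ} (hs : l.Pairwise (· ≥ ·)) {i k : ℕ}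
    (hik : i ≤ k) (hk : k < l.length) : l.getD k 0 ≤ l.getD i 0 := by
  rw [List.getD_eq_getElem l 0 hk, List.getD_eq_getElem l 0 (lt_of_le_of_lt hik hk)]
  exact hs.rel_get_of_le (a := ⟨i, lt_of_le_of_lt hik hk⟩) (b := ⟨k, hk⟩) hik

theorem countP_ge_of_sorted {D : List ℕ} (hD : D.Pairwise (· ≥ ·)) {c t : ℕ}
    (ht : t < D.length) (h : c ≤ D.getD t 0) :
    t + 1 ≤ D.countP (fun x => decide (c ≤ x)) := by
  conv_rhs => rw [← List.take_append_drop (t+1) D, List.countP_append]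
  have h1 : (D.take (t+1)).countP (fun x => decide (c ≤ x)) = (D.take (t+1)).length := by
    rw [List.countP_eq_length]
    rintro a ha
    rw [List.mem_take_iff_getElem] at ha
    obtain ⟨s, hs, rfl⟩ := ha
    have hsl : s < D.length := lt_of_lt_of_le hs (by omega)
    have : D.getD t 0 ≤ D.getD s 0 := sorted_getD_le hD (by omega) ht
    rw [List.getD_eq_getElem D 0 hsl, List.getD_eq_getElem D 0 ht] at this
    rw [List.getD_eq_getElem D 0 ht] at h
    simpa using le_trans h this
  have h2 : (D.take (t+1)).length = t + 1 := by simp; omega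
  omega

theorem countP_le_of_sorted {D : List ℕ} (hD : D.Pairwise (· ≥ ·)) {c t : ℕ}
    (ht : t < D.length) (h : D.getD t 0 < c) :
    D.countP (fun x => decide (c ≤ x)) ≤ t := by
  conv_lhs => rw [← List.take_append_drop t D, List.countP_append]
  have h0 : (D.drop t).countP (fun x => decide (c ≤ x)) = 0 := by
    rw [List.countP_eq_zero]
    rintro a ha
    rw [List.mem_iff_getElem] at ha
    obtain ⟨s, hs, rfl⟩ := ha
    have hsl : t + s < D.length := by rw [List.length_drop] at hs; omega
    have he : (D.drop t)[s] = D[t+s] := List.getElem_drop ..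
    have : D.getD (t+s) 0 ≤ D.getD t 0 := sorted_getD_le hD (by omega) hsl
    rw [List.getD_eq_getElem D 0 hsl, List.getD_eq_getElem D 0 ht] at this
    rw [List.getD_eq_getElem D 0 ht] at h
    rw [he]
    simp only [decide_eq_true_eq]
    omega
  have h2 : (D.take t).countP (fun x => decide (c ≤ x)) ≤ t := by
    calc _ ≤ (D.take t).length := List.countP_le_length
    _ ≤ t := by simp
  omega

/-- beta numbers -/
def muPD (l : List ℕ) (k : ℕ) : ℕ := l.getD k 0 + (l.length - 1 - k)

theorem muPD_lt {l : List ℕ} (hs : l.Pairwise (· ≥ ·)) {i k : ℕ} (hik : i < k)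
    (hk : k < l.length) : muPD l k < muPD l i := by
  have := sorted_getD_le hs hik.le hk
  unfold muPD; omega

theorem drop_getD {l : List ℕ} {i t : ℕ} (h : i + 1 + t < l.length) :
    (l.drop (i+1)).getD t 0 = l.getD (i+1+t) 0 := by
  have h' : t < (l.drop (i+1)).length := by rw [List.length_drop]; omega
  rw [List.getD_eq_getElem _ 0 h', List.getD_eq_getElem _ 0 h, List.getElem_drop]

theorem row_hooks (l : List ℕ) (hs : l.Pairwise (· ≥ ·)) (i : ℕ) (hi : i < l.length) :
    (∏ j ∈ Finset.range (l.getD i 0),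
        (l.getD i 0 - j + (l.drop (i+1)).countP (fun x => decide (j+1 ≤ x)))) *
      (∏ k ∈ Finset.Ioo i l.length, (muPD l i - muPD l k)) = Nat.factorial (muPD l i) := by
  set L := l.length with hL
  set a := l.getD i 0 with ha
  set A : ℕ → ℕ := fun c => (l.drop (i+1)).countP (fun x => decide (c ≤ x)) with hA
  set h : ℕ → ℕ := fun j => a - j + A (j+1) with hh
  set g : ℕ → ℕ := fun k => muPD l i - muPD l k with hg
  have hDs : (l.drop (i+1)).Pairwise (· ≥ ·) := hs.sublist (List.drop_sublist _ _)
  have hDlen : (l.drop (i+1)).length = L - (i+1) := by rw [List.length_drop]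
  have hAle : ∀ c, A c ≤ L - (i + 1) := fun c => hDlen ▸ List.countP_le_length
  have hAanti : ∀ c c', c ≤ c' → A c' ≤ A c := by
    intro c c' hcc
    exact List.countP_mono_left (fun x _ hx => by
      simp only [decide_eq_true_eq] at *; omega)
  -- getD of drop at position k-(i+1) is l.getD k 0
  have hDval : ∀ k, i < k → k < L → (l.drop (i+1)).getD (k - (i+1)) 0 = l.getD k 0 := by
    intro k h1 h2
    rw [drop_getD (by omega)]
    congr 1; omega
  have hmui : muPD l i = a + (L - 1 - i) := rfl
  -- membership
  have hmem : ∀ j ∈ Finset.range a, h j ∈ Finset.Icc 1 (muPD l i) := by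
    intro j hj
    rw [Finset.mem_range] at hj
    have := hAle (j+1)
    simp only [Finset.mem_Icc, hh, hmui]
    omega
  have gmem : ∀ k ∈ Finset.Ioo i L, g k ∈ Finset.Icc 1 (muPD l i) := by
    intro k hk
    rw [Finset.mem_Ioo] at hk
    have := muPD_lt hs hk.1 hk.2
    simp only [Finset.mem_Icc, hg]
    omega
  -- strict monotonicity / injectivity
  have hstrict : ∀ j j', j < j' → j' < a → h j' < h j := by
    intro j j' h1 h2
    have := hAanti (j+1) (j'+1) (by omega)
    simp only [hh]
    omega
  have hinj : Set.InjOn h (Finset.range a) := by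
    intro x hx y hy hxy
    rw [Finset.coe_range, Set.mem_Iio] at hx hy
    rcases lt_trichotomy x y with h1 | h1 | h1
    · exact absurd hxy (hstrict x y h1 hy).ne'
    · exact h1
    · exact absurd hxy (hstrict y x h1 hx).ne
  have ginj : Set.InjOn g (Finset.Ioo i L) := by
    intro x hx y hy hxy
    simp only [Finset.coe_Ioo, Set.mem_Ioo] at hx hy
    have hgs : ∀ u v, i < u → u < v → v < L → g u < g v := by
      intro u v h1 h2 h3
      have h4 := muPD_lt hs h2 h3
      have h5 := muPD_lt hs h1 (h2.trans h3)
      simp only [hg]; omega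
    rcases lt_trichotomy x y with h1 | h1 | h1
    · exact absurd hxy (hgs x y hx.1 h1 hy.2).ne
    · exact h1
    · exact absurd hxy (hgs y x hy.1 h1 hx.2).ne'
  -- disjointness
  have hdisj : ∀ j < a, ∀ k, i < k → k < L → h j ≠ g k := by
    intro j hj k hk1 hk2 heq
    have hlk : l.getD k 0 ≤ a := sorted_getD_le hs hk1.le hk2
    have hmuk : muPD l k = l.getD k 0 + (L - 1 - k) := rfl
    have hmult := muPD_lt hs hk1 hk2
    simp only [hh, hg] at heq
    by_cases hc : j + 1 ≤ l.getD k 0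
    · have h1 : (k - (i+1)) + 1 ≤ A (j+1) := by
        apply countP_ge_of_sorted hDs (by omega)
        rw [hDval k hk1 hk2]; exact hc
      omega
    · have h1 : A (j+1) ≤ k - (i+1) := by
        apply countP_le_of_sorted hDs (by omega)
        rw [hDval k hk1 hk2]; omega
      omega
  -- set equality
  have hcard : ((Finset.range a).image h).card = a :=
    (Finset.card_image_of_injOn hinj).trans (Finset.card_range a)
  have gcard : ((Finset.Ioo i L).image g).card = L - 1 - i := by
    rw [Finset.card_image_of_injOn ginj, Nat.card_Ioo]; omega
  have hdisj' : Disjoint ((Finset.range a).image h) ((Finset.Ioo i L).image g) := by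
    rw [Finset.disjoint_left]
    rintro x hx hy
    rw [Finset.mem_image] at hx hy
    obtain ⟨j, hj, rfl⟩ := hx
    obtain ⟨k, hk, hkx⟩ := hy
    rw [Finset.mem_range] at hj
    rw [Finset.mem_Ioo] at hk
    exact hdisj j hj k hk.1 hk.2 hkx.symm
  have hunion : ((Finset.range a).image h) ∪ ((Finset.Ioo i L).image g)
      = Finset.Icc 1 (muPD l i) := by
    apply Finset.eq_of_subset_of_card_le
    · apply Finset.union_subset
      · exact fun x hx => by
          obtain ⟨j, hj, rfl⟩ := Finset.mem_image.mp hx; exact hmem j hj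
      · exact fun x hx => by
          obtain ⟨k, hk, rfl⟩ := Finset.mem_image.mp hx; exact gmem k hk
    · rw [Finset.card_union_of_disjoint hdisj', hcard, gcard, Nat.card_Icc, hmui]
      omega
  calc (∏ j ∈ Finset.range a, h j) * (∏ k ∈ Finset.Ioo i L, g k)
      = (∏ x ∈ (Finset.range a).image h, x) * (∏ x ∈ (Finset.Ioo i L).image g, x) := by
        rw [Finset.prod_image hinj, Finset.prod_image ginj]
    _ = ∏ x ∈ ((Finset.range a).image h) ∪ ((Finset.Ioo i L).image g), x :=
        (Finset.prod_union hdisj').symm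
    _ = ∏ x ∈ Finset.Icc 1 (muPD l i), x := by rw [hunion]
    _ = Nat.factorial (muPD l i) := by
        rw [← Finset.Ico_add_one_right_eq_Icc, Finset.prod_Ico_id_eq_factorial]

theorem det_side (l : List ℕ) :
    (Matrix.det fun i j : Fin l.length =>
        if hm : (0 : ℤ) ≤ (l.getD i 0 : ℤ) - (i : ℤ) + (j : ℤ) then
          (1 : ℚ) / (Nat.factorial ((l.getD i 0 : ℤ) - (i : ℤ) + (j : ℤ)).toNat : ℚ)
        else 0) =
      (∏ i : Fin l.length, (1 : ℚ) / (Nat.factorial (muPD l i) : ℚ)) *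
        ∏ i : Fin l.length, ∏ k ∈ Finset.Ioi i, ((muPD l i : ℚ) - (muPD l k : ℚ)) := by
  set L := l.length with hL
  set v : Fin L → ℚ := fun i => (1 : ℚ) / (Nat.factorial (muPD l i) : ℚ) with hv
  set D : Fin L → Fin L → ℚ :=
    fun i j => ((muPD l i).descFactorial (L - 1 - (j : ℕ)) : ℚ) with hD
  have hM : ∀ i j : Fin L,
      (if hm : (0 : ℤ) ≤ (l.getD i 0 : ℤ) - (i : ℤ) + (j : ℤ) then
          (1 : ℚ) / (Nat.factorial ((l.getD i 0 : ℤ) - (i : ℤ) + (j : ℤ)).toNat : ℚ)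
        else 0) = v i * D i j := by
    intro i j
    have hi := i.isLt
    have hj := j.isLt
    have hkey : (l.getD i 0 : ℤ) - (i : ℤ) + (j : ℤ)
        = (muPD l i : ℤ) - ((L - 1 - (j : ℕ) : ℕ) : ℤ) := by
      unfold muPD; push_cast; omega
    split_ifs with hm
    · have h1 : L - 1 - (j : ℕ) ≤ muPD l i := by omega
      have h2 : ((l.getD i 0 : ℤ) - (i : ℤ) + (j : ℤ)).toNat
          = muPD l i - (L - 1 - (j : ℕ)) := by omega
      rw [h2]
      have h3 := Nat.factorial_mul_descFactorial h1
      have h4 : (Nat.factorial (muPD l i) : ℚ)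
          = (Nat.factorial (muPD l i - (L - 1 - (j : ℕ))) : ℚ)
            * (((muPD l i).descFactorial (L - 1 - (j : ℕ)) : ℕ) : ℚ) := by
        exact_mod_cast congrArg (Nat.cast : ℕ → ℚ) h3.symm
      have h5 : (Nat.factorial (muPD l i - (L - 1 - (j : ℕ))) : ℚ) ≠ 0 :=
        Nat.cast_ne_zero.mpr (Nat.factorial_ne_zero _)
      have h6 : (((muPD l i).descFactorial (L - 1 - (j : ℕ)) : ℕ) : ℚ) ≠ 0 := by
        rw [Nat.cast_ne_zero]
        intro h0
        rw [Nat.descFactorial_eq_zero_iff_lt] at h0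
        omega
      rw [hv, hD]
      field_simp [h4]
      exact h4
    · have h1 : muPD l i < L - 1 - (j : ℕ) := by omega
      have : D i j = 0 := by
        rw [hD]
        exact_mod_cast Nat.cast_eq_zero.mpr (Nat.descFactorial_eq_zero_iff_lt.mpr h1)
      rw [this, mul_zero]
  rw [show (fun i j : Fin L =>
      if hm : (0 : ℤ) ≤ (l.getD i 0 : ℤ) - (i : ℤ) + (j : ℤ) then
        (1 : ℚ) / (Nat.factorial ((l.getD i 0 : ℤ) - (i : ℤ) + (j : ℤ)).toNat : ℚ)
      else 0) = Matrix.of (fun i j => v i * Matrix.of D i j)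
    from funext fun i => funext fun j => hM i j]
  rw [Matrix.det_mul_column v (Matrix.of D)]
  congr 1
  -- now det D
  have hsub : Matrix.of D = (Matrix.of (fun i j : Fin L =>
      ((descPochhammer ℚ (j : ℕ)).eval ((muPD l (Fin.rev i) : ℚ))))).submatrix
        Fin.revPerm Fin.revPerm := by
    ext i j
    simp only [Matrix.submatrix_apply, Matrix.of_apply, Fin.revPerm_apply, Fin.rev_rev,
      descPochhammer_eval_eq_descFactorial, hD]
    congr 2
    have := j.isLt
    rw [Fin.val_rev]
    omega
  rw [hsub, Matrix.det_submatrix_equiv_self,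
    ← Matrix.det_eval_matrixOfPolynomials_eq_det_vandermonde
      (fun i => ((muPD l (Fin.rev i) : ℚ))) (fun j => descPochhammer ℚ (j : ℕ))
      (fun j => descPochhammer_natDegree (R := ℚ) (j : ℕ))
      (fun j => monic_descPochhammer _ _),
    Matrix.det_vandermonde]
  rw [Finset.prod_sigma' Finset.univ (fun i => Finset.Ioi i)
      (fun i j => ((muPD l (Fin.rev j) : ℚ)) - ((muPD l (Fin.rev i) : ℚ))),
    Finset.prod_sigma' (Finset.univ : Finset (Fin L)) (fun i => Finset.Ioi i)
      (fun i k => ((muPD l (i : ℕ) : ℚ)) - ((muPD l (k : ℕ) : ℚ)))]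
  refine Finset.prod_nbij' (fun p => ⟨Fin.rev p.2, Fin.rev p.1⟩)
    (fun p => ⟨Fin.rev p.2, Fin.rev p.1⟩) ?_ ?_ ?_ ?_ ?_
  · rintro ⟨a, b⟩ hab
    simp only [Finset.mem_sigma, Finset.mem_univ, Finset.mem_Ioi, true_and] at *
    exact Fin.rev_lt_rev.mpr hab
  · rintro ⟨a, b⟩ hab
    simp only [Finset.mem_sigma, Finset.mem_univ, Finset.mem_Ioi, true_and] at *
    exact Fin.rev_lt_rev.mpr hab
  · rintro ⟨a, b⟩ _; simp [Fin.rev_rev]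
  · rintro ⟨a, b⟩ _; simp [Fin.rev_rev]
  · rintro ⟨a, b⟩ _; simp [Fin.rev_rev]

theorem countP_split_sorted {l : List ℕ} (hs : l.Pairwise (· ≥ ·)) {i c : ℕ}
    (hi : i < l.length) (hc : c ≤ l.getD i 0) :
    l.countP (fun x => decide (c ≤ x))
      = (i + 1) + (l.drop (i+1)).countP (fun x => decide (c ≤ x)) := by
  conv_lhs => rw [← List.take_append_drop (i+1) l, List.countP_append]
  have h1 : (l.take (i+1)).countP (fun x => decide (c ≤ x)) = (l.take (i+1)).length := by
    rw [List.countP_eq_length]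
    rintro a ha
    rw [List.mem_take_iff_getElem] at ha
    obtain ⟨s, hsl', rfl⟩ := ha
    have hsl : s < l.length := lt_of_lt_of_le hsl' (by omega)
    have h2 : l.getD i 0 ≤ l.getD s 0 := sorted_getD_le hs (by omega) hi
    rw [List.getD_eq_getElem l 0 hsl, List.getD_eq_getElem l 0 hi] at h2
    rw [List.getD_eq_getElem l 0 hi] at hc
    simp only [decide_eq_true_eq]
    omega
  have h2 : (l.take (i+1)).length = i + 1 := by simp; omega
  omega

theorem prod_Ioi_fin {L : ℕ} (i : Fin L) (f : ℕ → ℚ) :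
    (∏ k ∈ Finset.Ioi i, f (k : ℕ)) = ∏ k ∈ Finset.Ioo (i : ℕ) L, f k := by
  refine Finset.prod_bij (fun k _ => (k : ℕ)) ?_ ?_ ?_ ?_
  · intro a ha
    rw [Finset.mem_Ioi] at ha
    rw [Finset.mem_Ioo]
    exact ⟨ha, a.isLt⟩
  · intro a _ b _ h
    exact Fin.val_injective h
  · intro b hb
    rw [Finset.mem_Ioo] at hb
    exact ⟨⟨b, hb.2⟩, Finset.mem_Ioi.mpr hb.1, rfl⟩
  · intro a _; rfl

/-- for a partition `λ = (λ_1 ≥ ⋯ ≥ λ_ℓ > 0)` of `n` (given as the list `l` of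
its parts), `det(1/(λ_i − i + j)!) = Π_{(i,j) ∈ λ} 1/hook_λ(i,j)`, where the matrix is
`ℓ×ℓ` with the convention `1/m! = 0` for `m < 0`, and
`hook_λ(i,j) = λ_i − j + λ'_j − i + 1` with `λ'` the conjugate partition
(`λ'_j = #{i : λ_i ≥ j}`).  Rows/columns of the matrix and cells are indexed below from `0`,
so the matrix entry at `(i₀,j₀)` is `1/(λ_{i₀+1} − (i₀+1) + (j₀+1))! = 1/(λ_{i₀+1} − i₀ + j₀)!`. -/
theorem det_inv_factorial_eq_prod_inv_hooks (n : ℕ) (l : List ℕ)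
    (hsorted : l.Pairwise (· ≥ ·)) (hpos : ∀ x ∈ l, 0 < x) (hsum : l.sum = n) :
    (Matrix.det fun i j : Fin l.length =>
        if hm : (0 : ℤ) ≤ (l.getD i 0 : ℤ) - (i : ℤ) + (j : ℤ) then
          (1 : ℚ) / (Nat.factorial ((l.getD i 0 : ℤ) - (i : ℤ) + (j : ℤ)).toNat : ℚ)
        else 0) =
      ∏ i ∈ Finset.range l.length, ∏ j ∈ Finset.range (l.getD i 0),
        (1 : ℚ) / ((l.getD i 0 : ℚ) - ((j : ℚ) + 1) +
          (l.countP (fun x => decide (j + 1 ≤ x)) : ℚ) - ((i : ℚ) + 1) + 1) := by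
  rw [det_side l]
  set L := l.length with hL
  have hrow : ∀ i ∈ Finset.range L,
      (∏ j ∈ Finset.range (l.getD i 0),
        (1 : ℚ) / ((l.getD i 0 : ℚ) - ((j : ℚ) + 1) +
          (l.countP (fun x => decide (j + 1 ≤ x)) : ℚ) - ((i : ℚ) + 1) + 1))
      = (1 / (Nat.factorial (muPD l i) : ℚ)) *
          ∏ k ∈ Finset.Ioo i L, ((muPD l i : ℚ) - (muPD l k : ℚ)) := by
    intro i hi
    rw [Finset.mem_range] at hi
    have hterm : ∀ j ∈ Finset.range (l.getD i 0),
        (1 : ℚ) / ((l.getD i 0 : ℚ) - ((j : ℚ) + 1) +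
          (l.countP (fun x => decide (j + 1 ≤ x)) : ℚ) - ((i : ℚ) + 1) + 1)
        = ((((l.getD i 0 - j
            + (l.drop (i+1)).countP (fun x => decide (j+1 ≤ x))) : ℕ) : ℚ))⁻¹ := by
      intro j hj
      rw [Finset.mem_range] at hj
      rw [countP_split_sorted hsorted hi (by omega)]
      rw [one_div]
      congr 1
      push_cast [Nat.cast_sub hj.le]
      ring
    rw [Finset.prod_congr rfl hterm, Finset.prod_inv_distrib, ← Nat.cast_prod]
    have hkey := row_hooks l hsorted i hi
    have hkeyQ : ((∏ j ∈ Finset.range (l.getD i 0),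
        (l.getD i 0 - j + (l.drop (i+1)).countP (fun x => decide (j+1 ≤ x))) : ℕ) : ℚ)
        * ((∏ k ∈ Finset.Ioo i L, (muPD l i - muPD l k) : ℕ) : ℚ)
        = (Nat.factorial (muPD l i) : ℚ) := by rw [hL]; exact_mod_cast hkey
    have hG : ((∏ k ∈ Finset.Ioo i L, (muPD l i - muPD l k) : ℕ) : ℚ)
        = ∏ k ∈ Finset.Ioo i L, ((muPD l i : ℚ) - (muPD l k : ℚ)) := by
      rw [Nat.cast_prod]
      refine Finset.prod_congr rfl fun k hk => ?_
      rw [Finset.mem_Ioo] at hk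
      exact Nat.cast_sub (muPD_lt hsorted hk.1 hk.2).le
    have hGne : ((∏ k ∈ Finset.Ioo i L, (muPD l i - muPD l k) : ℕ) : ℚ) ≠ 0 := by
      rw [Nat.cast_ne_zero, Finset.prod_ne_zero_iff]
      intro k hk
      rw [Finset.mem_Ioo] at hk
      have := muPD_lt hsorted hk.1 hk.2
      omega
    have hFne : (Nat.factorial (muPD l i) : ℚ) ≠ 0 :=
      Nat.cast_ne_zero.mpr (Nat.factorial_ne_zero _)
    rw [← hG, ← hkeyQ, one_div, mul_inv, mul_assoc, inv_mul_cancel₀ hGne, mul_one]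
  rw [Finset.prod_congr rfl hrow, Finset.prod_mul_distrib]
  congr 1
  · rw [Fin.prod_univ_eq_prod_range (fun i => (1 : ℚ) / (Nat.factorial (muPD l i) : ℚ)) L]
  · rw [show (∏ i : Fin L, ∏ k ∈ Finset.Ioi i, ((muPD l (i : ℕ) : ℚ) - (muPD l (k : ℕ) : ℚ)))
        = ∏ i : Fin L, (fun m => ∏ k ∈ Finset.Ioo m L,
            ((muPD l m : ℚ) - (muPD l k : ℚ))) (i : ℕ) from
      Finset.prod_congr rfl fun i _ => prod_Ioi_fin i fun k => (muPD l (i:ℕ) : ℚ) - muPD l k]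
    rw [Fin.prod_univ_eq_prod_range
      (fun m => ∏ k ∈ Finset.Ioo m L, ((muPD l m : ℚ) - (muPD l k : ℚ))) L]
end

section
/- For all complex numbers q and z with |q| < 1, the convergent infinite product Π_{i=1}^∞ (1 + q^i z) has the expansion Π_{i=1}^∞ (1 + q^i z) = 1 + Σ_{i=1}^∞ E'_i(q) z^i with coefficients E'_i(q) = q^{i(i+1)/2} / Π_{j=1}^i (1 − q^j), the series on the right converging absolutely for every z ∈ ℂ. -/
open Filter Finset Topology

private noncomputable def qcoef (q : ℂ) (i : ℕ) : ℂ :=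
  q ^ ((i + 1) * (i + 2) / 2) / ∏ j ∈ Finset.range (i + 1), (1 - q ^ (j + 1))

private lemma qexp_aux_mult {a : ℕ → ℂ} (h : Summable fun i => ‖a i‖) :
    Multipliable (fun i => 1 + a i) := by
  by_cases hz : ∀ i, 1 + a i ≠ 0
  · exact multipliable_one_add_of_summable h
  · push_neg at hz
    obtain ⟨i₀, hi₀⟩ := hz
    refine ⟨0, Tendsto.congr' ?_ tendsto_const_nhds⟩
    filter_upwards [eventually_ge_atTop {i₀}] with s hs
    exact (Finset.prod_eq_zero (hs (Finset.mem_singleton_self i₀)) hi₀).symm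

private lemma qexp_aux_prod_bound (a : ℕ → ℂ) (s : Finset ℕ) :
    ‖(∏ i ∈ s, (1 + a i)) - 1‖ ≤ (∏ i ∈ s, (1 + ‖a i‖)) - 1 := by
  classical
  induction s using Finset.induction_on with
  | empty => simp
  | insert j s hj ih =>
    rw [Finset.prod_insert hj, Finset.prod_insert hj]
    have h1 : (1 + a j) * ∏ i ∈ s, (1 + a i) - 1
        = (1 + a j) * ((∏ i ∈ s, (1 + a i)) - 1) + a j := by ring
    rw [h1]
    have h2 : ‖(1 + a j) * ((∏ i ∈ s, (1 + a i)) - 1) + a j‖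
        ≤ (1 + ‖a j‖) * ((∏ i ∈ s, (1 + ‖a i‖)) - 1) + ‖a j‖ := by
      refine (norm_add_le _ _).trans (add_le_add ?_ le_rfl)
      rw [norm_mul]
      refine mul_le_mul ((norm_add_le _ _).trans (by simp)) ih (norm_nonneg _) (by positivity)
    refine h2.trans (le_of_eq (by ring))

private lemma qexp_aux_prod_exp (a : ℕ → ℂ) (h : Summable fun i => ‖a i‖) (s : Finset ℕ) :
    ‖(∏ i ∈ s, (1 + a i)) - 1‖ ≤ Real.exp (∑' i, ‖a i‖) - 1 := by
  refine (qexp_aux_prod_bound a s).trans ?_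
  have h1 : (∏ i ∈ s, (1 + ‖a i‖)) ≤ Real.exp (∑ i ∈ s, ‖a i‖) := by
    rw [Real.exp_sum]
    exact Finset.prod_le_prod (fun i _ => by positivity)
      (fun i _ => by linarith [Real.add_one_le_exp ‖a i‖])
  have h2 : Real.exp (∑ i ∈ s, ‖a i‖) ≤ Real.exp (∑' i, ‖a i‖) :=
    Real.exp_le_exp.mpr (Summable.sum_le_tsum s (fun i _ => norm_nonneg _) h)
  linarith

private lemma qexp_ne {q : ℂ} (hq : ‖q‖ < 1) (n : ℕ) : 1 - q ^ (n + 1) ≠ 0 := by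
  intro h
  have h1 : q ^ (n + 1) = 1 := by linear_combination -h
  have h2 : ‖q ^ (n + 1)‖ < 1 := by
    rw [norm_pow]; exact pow_lt_one₀ (norm_nonneg q) hq (Nat.succ_ne_zero n)
  rw [h1, norm_one] at h2
  exact lt_irrefl _ h2

private lemma qexp_den_ne {q : ℂ} (hq : ‖q‖ < 1) (i : ℕ) :
    (∏ j ∈ Finset.range (i + 1), (1 - q ^ (j + 1))) ≠ 0 :=
  Finset.prod_ne_zero_iff.mpr fun j _ => qexp_ne hq j

private lemma qcoef_zero {q : ℂ} (hq : ‖q‖ < 1) : (1 - q) * qcoef q 0 = q := by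
  have h : 1 - q ≠ 0 := by simpa using qexp_ne hq 0
  simp only [qcoef]
  rw [Finset.prod_range_one, pow_one]
  rw [mul_comm, div_mul_cancel₀ _ h]

private lemma qcoef_rec {q : ℂ} (hq : ‖q‖ < 1) (i : ℕ) :
    (1 - q ^ (i + 2)) * qcoef q (i + 1) = q ^ (i + 2) * qcoef q i := by
  have hD := qexp_den_ne hq i
  have hn : 1 - q ^ (i + 2) ≠ 0 := by
    have := qexp_ne hq (i + 1); simpa using this
  have he : (i + 1 + 1) * (i + 1 + 2) / 2 = (i + 1) * (i + 2) / 2 + (i + 2) := by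
    obtain ⟨k, hk⟩ : Even ((i + 1) * (i + 2)) := Nat.even_mul_succ_self (i + 1)
    have hb : (i + 1 + 1) * (i + 1 + 2) = (i + 1) * (i + 2) + 2 * (i + 2) := by ring
    omega
  simp only [qcoef]
  rw [he, pow_add, Finset.prod_range_succ, show i + 1 + 1 = i + 2 from rfl]
  field_simp
  ring

private lemma qcoef_summable {q : ℂ} (hq : ‖q‖ < 1) (z : ℂ) :
    Summable (fun i : ℕ => ‖qcoef q i * z ^ (i + 1)‖) := by
  have hr0 : (0:ℝ) ≤ ‖q‖ := norm_nonneg q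
  refine summable_of_ratio_norm_eventually_le (r := 1/2) (by norm_num) ?_
  have hε : (0:ℝ) < 1 / (4 * (‖z‖ + 1)) ⊓ (1/2) :=
    lt_min (by positivity) (by norm_num)
  filter_upwards [(tendsto_pow_atTop_nhds_zero_of_lt_one hr0 hq).eventually
      (ge_mem_nhds hε)] with n hn
  have hn1 : ‖q‖ ^ n ≤ 1 / (4 * (‖z‖ + 1)) := le_trans hn (min_le_left _ _)
  have hn2 : ‖q‖ ^ n ≤ 1 / 2 := le_trans hn (min_le_right _ _)
  have hpow : ‖q‖ ^ (n + 2) ≤ ‖q‖ ^ n := pow_le_pow_of_le_one hr0 hq.le (by omega)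
  have hden : 1 - q ^ (n + 2) ≠ 0 := by simpa using qexp_ne hq (n + 1)
  have hdenlb : (1:ℝ)/2 ≤ ‖1 - q ^ (n + 2)‖ := by
    have := norm_sub_norm_le (1 : ℂ) (q ^ (n + 2))
    rw [norm_one, norm_pow] at this
    linarith
  have heq : qcoef q (n + 1) * z ^ (n + 1 + 1)
      = (q ^ (n + 2) / (1 - q ^ (n + 2)) * z) * (qcoef q n * z ^ (n + 1)) := by
    field_simp
    linear_combination z ^ (n + 2) * qcoef_rec hq n
  rw [heq]
  have hkey : ‖q ^ (n + 2) / (1 - q ^ (n + 2)) * z‖ ≤ 1/2 := by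
    rw [norm_mul, norm_div, norm_pow]
    rw [div_mul_eq_mul_div, div_le_iff₀ (by linarith)]
    have hz0 : (0:ℝ) ≤ ‖z‖ := norm_nonneg z
    have h1 : ‖q‖ ^ (n + 2) * ‖z‖ ≤ 1/4 := by
      have ha : ‖q‖ ^ (n + 2) * ‖z‖ ≤ (1 / (4 * (‖z‖ + 1))) * ‖z‖ :=
        mul_le_mul_of_nonneg_right (hpow.trans hn1) hz0
      have h4 : (1 / (4 * (‖z‖ + 1))) * ‖z‖ ≤ 1/4 := by
        rw [div_mul_eq_mul_div, div_le_div_iff₀ (by positivity) (by norm_num)]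
        nlinarith
      linarith
    nlinarith
  rw [Real.norm_of_nonneg (norm_nonneg _), Real.norm_of_nonneg (norm_nonneg _), norm_mul]
  exact mul_le_mul_of_nonneg_right hkey (norm_nonneg _)

/-- for `|q| < 1` and any `z ∈ ℂ`, the convergent infinite product
`E'(q,z) = Π_{i=1}^∞ (1 + q^i z)` has the expansion `1 + Σ_{i=1}^∞ E'_i(q) z^i` with
`E'_i(q) = q^{i(i+1)/2}/Π_{j=1}^i (1 − q^j)`, the series converging absolutely for every
`z` (the product is indexed below by `i = i₀ + 1` and the series by `i = i₀ + 1`,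
`i₀ ∈ ℕ`, and `j = j₀ + 1` in the denominator product). -/
theorem qExp_expansion (q : ℂ) (hq : ‖q‖ < 1) (z : ℂ) :
    Multipliable (fun i : ℕ => 1 + q ^ (i + 1) * z) ∧
    Summable (fun i : ℕ =>
      ‖(q ^ ((i + 1) * (i + 2) / 2) / ∏ j ∈ Finset.range (i + 1), (1 - q ^ (j + 1))) *
        z ^ (i + 1)‖) ∧
    (∏' i : ℕ, (1 + q ^ (i + 1) * z)) =
      1 + ∑' i : ℕ,
        (q ^ ((i + 1) * (i + 2) / 2) / ∏ j ∈ Finset.range (i + 1), (1 - q ^ (j + 1))) *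
          z ^ (i + 1) := by
  have hr0 : (0:ℝ) ≤ ‖q‖ := norm_nonneg q
  -- geometric summability
  have hga : ∀ w : ℂ, Summable (fun i : ℕ => ‖q ^ (i + 1) * w‖) := by
    intro w
    refine ((summable_geometric_of_lt_one hr0 hq).mul_right (‖q‖ * ‖w‖)).congr fun i => ?_
    rw [norm_mul, norm_pow, pow_succ]
    ring
  have hmul : ∀ w : ℂ, Multipliable (fun i : ℕ => 1 + q ^ (i + 1) * w) :=
    fun w => qexp_aux_mult (hga w)
  -- functional equation for the product
  have hF : ∀ w : ℂ, (∏' i : ℕ, (1 + q ^ (i + 1) * w))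
      = (1 + q * w) * ∏' i : ℕ, (1 + q ^ (i + 1) * (q * w)) := by
    intro w
    have hshift : Multipliable (fun n : ℕ => 1 + q ^ (n + 1 + 1) * w) :=
      (multipliable_congr fun n =>
        show (1 : ℂ) + q ^ (n + 1) * (q * w) = 1 + q ^ (n + 1 + 1) * w by ring).mp
        (hmul (q * w))
    rw [tprod_eq_zero_mul' (f := fun n => 1 + q ^ (n + 1) * w) hshift]
    congr 1
    · norm_num
    · exact tprod_congr fun b => by ring
  -- functional equation for the sum
  have hG : ∀ w : ℂ, (1 + ∑' i : ℕ, qcoef q i * w ^ (i + 1))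
      = (1 + q * w) * (1 + ∑' i : ℕ, qcoef q i * (q * w) ^ (i + 1)) := by
    intro w
    have hd : Summable (fun i : ℕ => qcoef q i * w ^ (i + 1)) := (qcoef_summable hq w).of_norm
    have hu : Summable (fun i : ℕ => q ^ (i + 1) * (qcoef q i * w ^ (i + 1))) := by
      refine Summable.of_norm_bounded (qcoef_summable hq w) fun i => ?_
      rw [norm_mul]
      refine mul_le_of_le_one_left (norm_nonneg _) ?_
      rw [norm_pow]
      exact pow_le_one₀ hr0 hq.le
    have hsub : Summable (fun i : ℕ =>
        qcoef q i * w ^ (i + 1) - q ^ (i + 1) * (qcoef q i * w ^ (i + 1))) := hd.sub hu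
    have hv0 : qcoef q 0 * w ^ (0 + 1) - q ^ (0 + 1) * (qcoef q 0 * w ^ (0 + 1)) = q * w := by
      linear_combination w * qcoef_zero hq
    have hvs : ∀ n : ℕ, qcoef q (n + 1) * w ^ (n + 1 + 1)
        - q ^ (n + 1 + 1) * (qcoef q (n + 1) * w ^ (n + 1 + 1))
        = q * w * (q ^ (n + 1) * (qcoef q n * w ^ (n + 1))) := fun n => by
      linear_combination w ^ (n + 2) * qcoef_rec hq n
    have key : ∑' i : ℕ, (qcoef q i * w ^ (i + 1) - q ^ (i + 1) * (qcoef q i * w ^ (i + 1)))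
        = q * w + q * w * ∑' i : ℕ, q ^ (i + 1) * (qcoef q i * w ^ (i + 1)) := by
      rw [Summable.tsum_eq_zero_add hsub, hv0]
      congr 1
      rw [← tsum_mul_left]
      exact tsum_congr hvs
    have hsplit : ∑' i : ℕ,
        (qcoef q i * w ^ (i + 1) - q ^ (i + 1) * (qcoef q i * w ^ (i + 1)))
        = (∑' i : ℕ, qcoef q i * w ^ (i + 1))
          - ∑' i : ℕ, q ^ (i + 1) * (qcoef q i * w ^ (i + 1)) := Summable.tsum_sub hd hu
    have hswap : ∑' i : ℕ, qcoef q i * (q * w) ^ (i + 1)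
        = ∑' i : ℕ, q ^ (i + 1) * (qcoef q i * w ^ (i + 1)) :=
      tsum_congr fun i => by rw [mul_pow]; ring
    rw [hswap]
    linear_combination key - hsplit
  -- iteration
  have hiter : ∀ n : ℕ,
      (∏' i : ℕ, (1 + q ^ (i + 1) * z)) - (1 + ∑' i : ℕ, qcoef q i * z ^ (i + 1))
      = (∏ i ∈ Finset.range n, (1 + q ^ (i + 1) * z)) *
        ((∏' i : ℕ, (1 + q ^ (i + 1) * (q ^ n * z)))
          - (1 + ∑' i : ℕ, qcoef q i * (q ^ n * z) ^ (i + 1))) := by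
    intro n
    induction n with
    | zero => simp
    | succ n ih =>
      have e : q * (q ^ n * z) = q ^ (n + 1) * z := by ring
      rw [Finset.prod_range_succ, ih, hF (q ^ n * z), hG (q ^ n * z)]
      simp only [e]
      ring
  -- continuity of the product at 0 along q^n z
  have hwlim : Tendsto (fun n : ℕ => ‖q‖ ^ n * ‖z‖) atTop (𝓝 0) := by
    simpa using (tendsto_pow_atTop_nhds_zero_of_lt_one hr0 hq).mul_const ‖z‖
  have hT : ∀ w : ℂ, (∑' i : ℕ, ‖q ^ (i + 1) * w‖) = (∑' i : ℕ, ‖q‖ ^ (i + 1)) * ‖w‖ := by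
    intro w
    rw [← tsum_mul_right]
    exact tsum_congr fun i => by rw [norm_mul, norm_pow]
  have hFbound : ∀ w : ℂ, ‖(∏' i : ℕ, (1 + q ^ (i + 1) * w)) - 1‖
      ≤ Real.exp ((∑' i : ℕ, ‖q‖ ^ (i + 1)) * ‖w‖) - 1 := by
    intro w
    have hp : Tendsto (fun s : Finset ℕ => ∏ i ∈ s, (1 + q ^ (i + 1) * w)) atTop
        (𝓝 (∏' i : ℕ, (1 + q ^ (i + 1) * w))) := (hmul w).hasProd
    refine le_of_tendsto ((hp.sub_const 1).norm) (Eventually.of_forall fun s => ?_)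
    rw [← hT w]
    exact qexp_aux_prod_exp _ (hga w) s
  have hFcont : Tendsto (fun n : ℕ => (∏' i : ℕ, (1 + q ^ (i + 1) * (q ^ n * z)))) atTop
      (𝓝 1) := by
    have hb : Tendsto
        (fun n : ℕ => Real.exp ((∑' i : ℕ, ‖q‖ ^ (i + 1)) * (‖q‖ ^ n * ‖z‖)) - 1) atTop
        (𝓝 0) := by
      have hm : Tendsto (fun n : ℕ => (∑' i : ℕ, ‖q‖ ^ (i + 1)) * (‖q‖ ^ n * ‖z‖)) atTop
          (𝓝 0) := by simpa using hwlim.const_mul (∑' i : ℕ, ‖q‖ ^ (i + 1))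
      have hc := (Real.continuous_exp.tendsto' 0 1 Real.exp_zero).comp hm
      simpa [Function.comp] using hc.sub_const 1
    have h0 : Tendsto (fun n : ℕ => (∏' i : ℕ, (1 + q ^ (i + 1) * (q ^ n * z))) - 1) atTop
        (𝓝 0) := by
      refine squeeze_zero_norm' (Eventually.of_forall fun n => ?_) hb
      have := hFbound (q ^ n * z)
      rwa [norm_mul, norm_pow] at this
    have := h0.add_const 1
    simpa using this
  -- continuity of the sum at 0 along q^n z
  have hC : Summable (fun i : ℕ => ‖qcoef q i‖) :=
    (qcoef_summable hq 1).congr fun i => by simp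
  have hGcont : Tendsto (fun n : ℕ => 1 + ∑' i : ℕ, qcoef q i * (q ^ n * z) ^ (i + 1)) atTop
      (𝓝 1) := by
    have hb : Tendsto (fun n : ℕ => (∑' i : ℕ, ‖qcoef q i‖) * (‖q‖ ^ n * ‖z‖)) atTop
        (𝓝 0) := by
      simpa using hwlim.const_mul (∑' i : ℕ, ‖qcoef q i‖)
    have h0 : Tendsto (fun n : ℕ => ∑' i : ℕ, qcoef q i * (q ^ n * z) ^ (i + 1)) atTop
        (𝓝 0) := by
      refine squeeze_zero_norm' ?_ hb
      filter_upwards [hwlim.eventually (ge_mem_nhds (by norm_num : (0:ℝ) < 1))] with n hn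
      have hwn : ‖q ^ n * z‖ ≤ 1 := by rwa [norm_mul, norm_pow]
      refine (norm_tsum_le_tsum_norm (qcoef_summable hq (q ^ n * z))).trans ?_
      rw [← tsum_mul_right]
      refine Summable.tsum_le_tsum (fun i => ?_) (qcoef_summable hq (q ^ n * z))
        (hC.mul_right _)
      have hnz : ‖q‖ ^ n * ‖z‖ = ‖q ^ n * z‖ := by rw [norm_mul, norm_pow]
      rw [norm_mul, norm_pow, hnz]
      refine mul_le_mul_of_nonneg_left ?_ (norm_nonneg _)
      calc ‖q ^ n * z‖ ^ (i + 1) ≤ ‖q ^ n * z‖ ^ 1 :=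
            pow_le_pow_of_le_one (norm_nonneg _) hwn (by omega)
        _ = ‖q ^ n * z‖ := pow_one _
    have := h0.const_add 1
    simpa using this
  -- conclude
  have hp : Tendsto (fun n : ℕ => ∏ i ∈ Finset.range n, (1 + q ^ (i + 1) * z)) atTop
      (𝓝 (∏' i : ℕ, (1 + q ^ (i + 1) * z))) := (hmul z).hasProd.tendsto_prod_nat
  have h1 : Tendsto (fun n : ℕ => (∏ i ∈ Finset.range n, (1 + q ^ (i + 1) * z)) *
      ((∏' i : ℕ, (1 + q ^ (i + 1) * (q ^ n * z)))
        - (1 + ∑' i : ℕ, qcoef q i * (q ^ n * z) ^ (i + 1)))) atTop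
      (𝓝 ((∏' i : ℕ, (1 + q ^ (i + 1) * z)) * (1 - 1))) :=
    hp.mul (hFcont.sub hGcont)
  have h2 : Tendsto (fun _ : ℕ =>
      (∏' i : ℕ, (1 + q ^ (i + 1) * z)) - (1 + ∑' i : ℕ, qcoef q i * z ^ (i + 1))) atTop
      (𝓝 ((∏' i : ℕ, (1 + q ^ (i + 1) * z)) * (1 - 1))) :=
    h1.congr fun n => (hiter n).symm
  have h3 := tendsto_nhds_unique h2 tendsto_const_nhds
  refine ⟨hmul z, qcoef_summable hq z, ?_⟩
  have : (∏' i : ℕ, (1 + q ^ (i + 1) * z)) = 1 + ∑' i : ℕ, qcoef q i * z ^ (i + 1) := by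
    linear_combination -h3
  exact this
end
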